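/- In a semilinear space X, if x is convex (i.e., (α+β)x = αx + βx for all α,β ≥ 0) and invertible with inverse x', then x' is also convex and invertible. -/
import Mathlib


structure SemilinearSpace (X : Type*) where
  add : X → X → X
  smul : ℝ → X → X
  theta : X
  add_comm : ∀ x y, add x y = add y x
  add_assoc : ∀ x y z, add x (add y z) = add (add x y) z
  add_theta : ∀ x, add x theta = x
  smul_add : ∀ (a : ℝ) x y, smul a (add x y) = add (smul a x) (smul a y)
  smul_smul : ∀ (a b : ℝ) x, smul a (smul b x) = smul (a * b) x
  one_smul : ∀ x, smul 1 x = x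
  zero_smul : ∀ x, smul 0 x = theta

/-- `x` is a convex element: `(α+β)x = αx + βx` for all `α, β ≥ 0`. -/
def SemilinearSpace.IsConvexElem {X : Type*} (S : SemilinearSpace X) (x : X) : Prop :=
  ∀ a b : ℝ, 0 ≤ a → 0 ≤ b → S.smul (a + b) x = S.add (S.smul a x) (S.smul b x)

/-- If `x` is convex and invertible with inverse `x'`, then `x'` is also convex
and invertible. -/
theorem inverse_of_convex_invertible_is_convex_invertible {X : Type*}
    (S : SemilinearSpace X) (x x' : X)
    (hconv : S.IsConvexElem x) (hinv : S.add x x' = S.theta) :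
    S.IsConvexElem x' ∧ ∃ y : X, S.add x' y = S.theta := by
  have theta_add : ∀ z, S.add S.theta z = z := fun z => by
    rw [S.add_comm, S.add_theta]
  have smul_theta : ∀ c : ℝ, S.smul c S.theta = S.theta := fun c => by
    rw [← S.zero_smul x, S.smul_smul, mul_zero, S.zero_smul]
  -- uniqueness of inverses
  have uniq : ∀ u z v : X, S.add u z = S.theta → S.add z v = S.theta → u = v := by
    intro u z v h1 h2
    calc u = S.add u S.theta := (S.add_theta u).symm
      _ = S.add u (S.add z v) := by rw [h2]
      _ = S.add (S.add u z) v := S.add_assoc u z v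
      _ = v := by rw [h1, theta_add]
  constructor
  · intro a b ha hb
    have key1 : S.add (S.smul (a + b) x') (S.smul (a + b) x) = S.theta := by
      rw [← S.smul_add, S.add_comm x' x, hinv, smul_theta]
    have key2 : S.add (S.smul (a + b) x) (S.add (S.smul a x') (S.smul b x')) =
        S.theta := by
      rw [hconv a b ha hb]
      calc S.add (S.add (S.smul a x) (S.smul b x)) (S.add (S.smul a x') (S.smul b x'))
          = S.add (S.smul a (S.add x x')) (S.smul b (S.add x x')) := by
            rw [S.smul_add, S.smul_add]
            rw [← S.add_assoc, ← S.add_assoc]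
            congr 1
            rw [S.add_assoc, S.add_assoc, S.add_comm (S.smul b x) (S.smul a x')]
        _ = S.theta := by rw [hinv, smul_theta, theta_add, smul_theta]
    exact uniq _ _ _ key1 key2
  · exact ⟨x, by rw [S.add_comm, hinv]⟩
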